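/- Let k, k₀ : [0, ∞) → ℝ be continuous with k(s) ≤ 0 for all s, k₀ non-increasing with k₀(s) < 0 for all s, and let F, F₀ be the solutions of F'' + kF = 0 and F₀'' + k₀F₀ = 0 respectively, both with value 0 and derivative 1 at 0. Assume the function φ(s) = |k(s) − k₀(s)|/√(−k₀(s)) is integrable on [0, ∞) and set C = (π/2)·∫₀^∞ φ(t) dt. Then e^{−C} ≤ F(s)/F₀(s) ≤ e^{C} for all s > 0. -/

import Mathlib

open Set Real Filter Topology MeasureTheory

/-- monotonicity helper on Icc from HasDerivAt on interior. -/
lemma myMonoIcc {f f' : ℝ → ℝ} {a b : ℝ}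
    (hc : ContinuousOn f (Icc a b))
    (hd : ∀ x ∈ Ioo a b, HasDerivAt f (f' x) x)
    (h0 : ∀ x ∈ Ioo a b, 0 ≤ f' x) : MonotoneOn f (Icc a b) := by
  refine monotoneOn_of_hasDerivWithinAt_nonneg (f' := f') (convex_Icc a b) hc ?_ ?_
  · intro x hx
    rw [interior_Icc] at hx ⊢
    exact (hd x hx).hasDerivWithinAt
  · intro x hx
    rw [interior_Icc] at hx
    exact h0 x hx

/-- monotonicity helper on Ici 0 from HasDerivWithinAt. -/
lemma myMonoIci {f f' : ℝ → ℝ}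
    (hd : ∀ x ∈ Ici (0:ℝ), HasDerivWithinAt f (f' x) (Ici 0) x)
    (h0 : ∀ x ∈ Ici (0:ℝ), 0 ≤ f' x) : MonotoneOn f (Ici 0) := by
  refine monotoneOn_of_hasDerivWithinAt_nonneg (f' := f') (convex_Ici 0)
    (fun x hx => (hd x hx).continuousWithinAt) ?_ ?_
  · intro x hx
    rw [interior_Ici] at hx ⊢
    exact ((hd x (Set.mem_Ici.2 (le_of_lt (Set.mem_Ioi.1 hx)))).hasDerivAt (Ici_mem_nhds hx)).hasDerivWithinAt
  · intro x hx
    rw [interior_Ici] at hx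
    exact h0 x (Set.mem_Ici.2 (le_of_lt (Set.mem_Ioi.1 hx)))

lemma jacobi_nonneg (k F F' F'' : ℝ → ℝ)
    (hk_nonpos : ∀ s ∈ Ici (0:ℝ), k s ≤ 0)
    (hF' : ∀ s ∈ Ici (0:ℝ), HasDerivWithinAt F (F' s) (Ici 0) s)
    (hF'' : ∀ s ∈ Ici (0:ℝ), HasDerivWithinAt F' (F'' s) (Ici 0) s)
    (hODE : ∀ s ∈ Ici (0:ℝ), F'' s + k s * F s = 0)
    (hF0 : F 0 = 0) (hF'0 : F' 0 = 1) :
    ∀ s ∈ Ici (0:ℝ), 0 ≤ F s := by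
  have hFc : ContinuousOn F (Ici 0) := fun s hs => (hF' s hs).continuousWithinAt
  have hF'c : ContinuousOn F' (Ici 0) := fun s hs => (hF'' s hs).continuousWithinAt
  -- main claim: if F ≥ 0 on [0,u] then u ≤ F u
  have claim : ∀ u : ℝ, 0 ≤ u → (∀ t ∈ Icc 0 u, 0 ≤ F t) → u ≤ F u := by
    intro u hu hpos
    have hsub : Icc (0:ℝ) u ⊆ Ici 0 := fun t ht => ht.1
    have hF'mono : MonotoneOn F' (Icc 0 u) := by
      refine myMonoIcc (f' := F'') (hF'c.mono hsub) ?_ ?_ <;> intro x hx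
      · exact (hF'' x (le_of_lt hx.1)).hasDerivAt (Ici_mem_nhds hx.1)
      · have h1 := hODE x (le_of_lt hx.1)
        have h2 : 0 ≤ -(k x) * F x :=
          mul_nonneg (neg_nonneg.2 (hk_nonpos x (le_of_lt hx.1)))
            (hpos x ⟨le_of_lt hx.1, le_of_lt hx.2⟩)
        nlinarith
    have hF'ge : ∀ t ∈ Icc (0:ℝ) u, 1 ≤ F' t := by
      intro t ht
      have := hF'mono (left_mem_Icc.2 hu) ht ht.1
      rwa [hF'0] at this
    -- F - id monotone
    have hmono : MonotoneOn (fun x => F x - x) (Icc 0 u) := by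
      refine myMonoIcc (f' := fun x => F' x - 1) ((hFc.mono hsub).sub continuousOn_id) ?_ ?_ <;> intro x hx
      · exact ((hF' x (le_of_lt hx.1)).hasDerivAt (Ici_mem_nhds hx.1)).sub (hasDerivAt_id x)
      · have := hF'ge x ⟨le_of_lt hx.1, le_of_lt hx.2⟩; show (0:ℝ) ≤ F' x - 1; linarith
    have := hmono (left_mem_Icc.2 hu) (right_mem_Icc.2 hu) hu
    simp only [hF0] at this
    linarith
  -- near 0, F' > 0 hence F ≥ 0 on some [0, δ]
  have hδ : ∃ δ > 0, ∀ t ∈ Icc (0:ℝ) δ, 0 ≤ F t := by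
    have h1 : Tendsto F' (𝓝[Ici 0] 0) (𝓝 1) := by
      have := (hF'c 0 Set.self_mem_Ici).tendsto; rwa [hF'0] at this
    have h2 : ∀ᶠ t in 𝓝[Ici 0] (0:ℝ), 0 < F' t := h1.eventually (eventually_gt_nhds one_pos)
    rw [eventually_nhdsWithin_iff] at h2
    rcases Metric.eventually_nhds_iff.1 h2 with ⟨δ, hδpos, hball⟩
    refine ⟨δ/2, by linarith, fun t ht => ?_⟩
    have hmono : MonotoneOn F (Icc 0 (δ/2)) := by
      refine myMonoIcc (f' := F') (hFc.mono (fun t ht => ht.1)) ?_ ?_ <;> intro x hx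
      · exact (hF' x (le_of_lt hx.1)).hasDerivAt (Ici_mem_nhds hx.1)
      · have : dist x 0 < δ := by
          rw [Real.dist_eq, sub_zero, abs_of_pos hx.1]; linarith [hx.2]
        exact le_of_lt (hball this (le_of_lt hx.1))
    have := hmono (left_mem_Icc.2 (by linarith)) ht ht.1
    rwa [hF0] at this
  obtain ⟨δ, hδpos, hδF⟩ := hδ
  by_contra hcon
  push_neg at hcon
  obtain ⟨s₀, hs₀, hFs₀⟩ := hcon
  set bad : Set ℝ := {t | 0 ≤ t ∧ F t < 0} with hbad
  have hne : bad.Nonempty := ⟨s₀, hs₀, hFs₀⟩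
  have hbdd : BddBelow bad := ⟨0, fun t ht => ht.1⟩
  set u := sInf bad with hu
  have hu0 : 0 ≤ u := le_csInf hne (fun t ht => ht.1)
  have hδu : δ ≤ u := by
    apply le_csInf hne
    intro t ht
    by_contra htδ
    push_neg at htδ
    exact absurd (hδF t ⟨ht.1, le_of_lt htδ⟩) (not_le.2 ht.2)
  have hupos : 0 < u := lt_of_lt_of_le hδpos hδu
  -- F ≥ 0 on [0, u)
  have hlt : ∀ t, 0 ≤ t → t < u → 0 ≤ F t := by
    intro t ht htu
    by_contra h
    push_neg at h
    exact absurd (csInf_le hbdd ⟨ht, h⟩) (not_le.2 htu)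
  -- F u ≤ 0 : u in closure of bad
  have hFu_le : F u ≤ 0 := by
    have h1 : u ∈ closure bad := csInf_mem_closure hne hbdd
    have h2 : IsClosed (Ici 0 ∩ F ⁻¹' (Iic 0)) :=
      hFc.preimage_isClosed_of_isClosed isClosed_Ici isClosed_Iic
    have h3 : bad ⊆ Ici 0 ∩ F ⁻¹' (Iic 0) := fun t ht => ⟨ht.1, le_of_lt ht.2⟩
    have := (closure_minimal h3 h2) h1
    exact this.2
  -- F u ≥ 0 by continuity from the left
  have hFu_ge : 0 ≤ F u := by
    have h1 : u ∈ closure (Ico 0 u) := by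
      rw [closure_Ico (ne_of_lt hupos)]; exact right_mem_Icc.2 hu0
    have h2 : IsClosed (Ici 0 ∩ F ⁻¹' (Ici 0)) :=
      hFc.preimage_isClosed_of_isClosed isClosed_Ici isClosed_Ici
    have h3 : Ico 0 u ⊆ Ici 0 ∩ F ⁻¹' (Ici 0) := fun t ht => ⟨ht.1, hlt t ht.1 ht.2⟩
    exact ((closure_minimal h3 h2) h1).2
  have : u ≤ F u := by
    apply claim u hu0
    intro t ht
    rcases eq_or_lt_of_le ht.2 with h | h
    · rw [h]; exact hFu_ge
    · exact hlt t ht.1 h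
  linarith

lemma jacobi_facts (k F F' F'' : ℝ → ℝ)
    (hk_nonpos : ∀ s ∈ Ici (0:ℝ), k s ≤ 0)
    (hF' : ∀ s ∈ Ici (0:ℝ), HasDerivWithinAt F (F' s) (Ici 0) s)
    (hF'' : ∀ s ∈ Ici (0:ℝ), HasDerivWithinAt F' (F'' s) (Ici 0) s)
    (hODE : ∀ s ∈ Ici (0:ℝ), F'' s + k s * F s = 0)
    (hF0 : F 0 = 0) (hF'0 : F' 0 = 1) :
    (∀ s ∈ Ici (0:ℝ), 0 ≤ F s) ∧ (∀ s ∈ Ici (0:ℝ), 1 ≤ F' s) ∧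
      (∀ s ∈ Ici (0:ℝ), s ≤ F s) ∧ MonotoneOn F (Ici 0) := by
  have hFpos := jacobi_nonneg k F F' F'' hk_nonpos hF' hF'' hODE hF0 hF'0
  have hF''nonneg : ∀ s ∈ Ici (0:ℝ), 0 ≤ F'' s := by
    intro s hs
    have h1 := hODE s hs
    have h2 : 0 ≤ -(k s) * F s := mul_nonneg (neg_nonneg.2 (hk_nonpos s hs)) (hFpos s hs)
    nlinarith
  have hF'mono : MonotoneOn F' (Ici 0) := myMonoIci (f' := F'') hF'' hF''nonneg
  have hF'ge : ∀ s ∈ Ici (0:ℝ), 1 ≤ F' s := by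
    intro s hs
    have := hF'mono self_mem_Ici hs hs
    rwa [hF'0] at this
  have hdiff : MonotoneOn (fun x => F x - x) (Ici 0) := by
    apply myMonoIci (f' := fun x => F' x - 1)
    · intro x hx
      exact (hF' x hx).sub (hasDerivWithinAt_id x _)
    · intro x hx
      have := hF'ge x hx
      show (0:ℝ) ≤ F' x - 1
      linarith
  have hge : ∀ s ∈ Ici (0:ℝ), s ≤ F s := by
    intro s hs
    have := hdiff self_mem_Ici hs hs
    simp only [hF0] at this
    linarith
  have hFmono : MonotoneOn F (Ici 0) :=
    myMonoIci (f' := F') hF' (fun x hx => le_trans zero_le_one (hF'ge x hx))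
  exact ⟨hFpos, hF'ge, hge, hFmono⟩

/-- cosh comparison: for `0 < t ≤ σ`, `F₀ σ ≥ F₀ t * cosh (√(-k₀ t) * (σ - t))`. -/
lemma cosh_comparison (k₀ F₀ F₀' F₀'' : ℝ → ℝ)
    (hk₀_neg : ∀ s ∈ Ici (0:ℝ), k₀ s < 0)
    (hk₀_mono : ∀ s ∈ Ici (0:ℝ), ∀ t ∈ Ici (0:ℝ), s ≤ t → k₀ t ≤ k₀ s)
    (hF₀' : ∀ s ∈ Ici (0:ℝ), HasDerivWithinAt F₀ (F₀' s) (Ici 0) s)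
    (hF₀'' : ∀ s ∈ Ici (0:ℝ), HasDerivWithinAt F₀' (F₀'' s) (Ici 0) s)
    (hODE₀ : ∀ s ∈ Ici (0:ℝ), F₀'' s + k₀ s * F₀ s = 0)
    (hpos : ∀ s ∈ Ici (0:ℝ), 0 ≤ F₀ s)
    (hd1 : ∀ s ∈ Ici (0:ℝ), 1 ≤ F₀' s)
    {t σ : ℝ} (ht : 0 < t) (htσ : t ≤ σ) :
    F₀ t * Real.cosh (Real.sqrt (-k₀ t) * (σ - t)) ≤ F₀ σ := by
  set a := Real.sqrt (-k₀ t) with ha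
  have hkt : (0:ℝ) ≤ -k₀ t := by linarith [hk₀_neg t (le_of_lt ht)]
  have ha2 : a ^ 2 = -k₀ t := Real.sq_sqrt hkt
  set c : ℝ → ℝ := fun x => Real.cosh (a * (x - t)) with hc
  set c' : ℝ → ℝ := fun x => a * Real.sinh (a * (x - t)) with hc'
  have hcd : ∀ x : ℝ, HasDerivAt c (c' x) x := by
    intro x
    have h1 : HasDerivAt (fun x : ℝ => a * (x - t)) a x := by
      simpa using (((hasDerivAt_id x).sub_const t).const_mul a)
    have := (Real.hasDerivAt_cosh (a * (x - t))).comp x h1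
    simpa [hc, hc', mul_comm, Function.comp_def] using this
  have hc'd : ∀ x : ℝ, HasDerivAt c' (a ^ 2 * c x) x := by
    intro x
    have h1 : HasDerivAt (fun x : ℝ => a * (x - t)) a x := by
      simpa using (((hasDerivAt_id x).sub_const t).const_mul a)
    have h2 := ((Real.hasDerivAt_sinh (a * (x - t))).comp x h1).const_mul a
    simpa [hc, hc', mul_comm, mul_assoc, pow_two] using h2
  have hcpos : ∀ x : ℝ, 0 < c x := fun x => Real.cosh_pos (a * (x - t))
  have hin : Continuous fun x : ℝ => a * (x - t) :=
    continuous_const.mul (continuous_id.sub continuous_const)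
  have hccont : Continuous c := Real.continuous_cosh.comp hin
  have hc'cont : Continuous c' := continuous_const.mul (Real.continuous_sinh.comp hin)
  -- W₂ = F₀' * c - F₀ * c'
  have hF₀c : ContinuousOn F₀ (Ici 0) := fun s hs => (hF₀' s hs).continuousWithinAt
  have hF₀'c : ContinuousOn F₀' (Ici 0) := fun s hs => (hF₀'' s hs).continuousWithinAt
  have hsub : Icc t σ ⊆ Ici 0 := fun x hx => le_trans (le_of_lt ht) hx.1
  set W₂ : ℝ → ℝ := fun x => F₀' x * c x - F₀ x * c' x with hW₂
  have hW₂mono : MonotoneOn W₂ (Icc t σ) := by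
    refine myMonoIcc (f' := fun x => (-k₀ x - a ^ 2) * (F₀ x * c x)) ?_ ?_ ?_
    · exact ((hF₀'c.mono hsub).mul
        ((Continuous.continuousOn (by continuity) : ContinuousOn c (Icc t σ)))).sub
        ((hF₀c.mono hsub).mul
        ((Continuous.continuousOn (by continuity) : ContinuousOn c' (Icc t σ))))
    · intro x hx
      have hx0 : (0:ℝ) < x := lt_of_lt_of_le ht (le_of_lt hx.1)
      have hdF₀ : HasDerivAt F₀ (F₀' x) x := (hF₀' x (le_of_lt hx0)).hasDerivAt (Ici_mem_nhds hx0)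
      have hdF₀' : HasDerivAt F₀' (F₀'' x) x :=
        (hF₀'' x (le_of_lt hx0)).hasDerivAt (Ici_mem_nhds hx0)
      have := ((hdF₀'.mul (hcd x)).sub (hdF₀.mul (hc'd x)))
      have hode := hODE₀ x (le_of_lt hx0)
      have heq : F₀'' x * c x + F₀' x * c' x - (F₀' x * c' x + F₀ x * (a ^ 2 * c x))
          = (-k₀ x - a ^ 2) * (F₀ x * c x) := by linear_combination c x * hode
      rwa [heq] at this
    · intro x hx
      have hx0 : (0:ℝ) < x := lt_trans ht hx.1
      have h1 : k₀ x ≤ k₀ t :=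
        hk₀_mono t (le_of_lt ht) x (le_of_lt hx0) (le_of_lt hx.1)
      have h2 : 0 ≤ F₀ x * c x := mul_nonneg (hpos x (le_of_lt hx0)) (le_of_lt (hcpos x))
      have h3 : 0 ≤ -k₀ x - a ^ 2 := by rw [ha2]; linarith
      positivity
  have hW₂t : W₂ t = F₀' t := by
    simp [hW₂, hc, hc']
  have hW₂nonneg : ∀ x ∈ Icc t σ, 0 ≤ W₂ x := by
    intro x hx
    have := hW₂mono (left_mem_Icc.2 htσ) hx hx.1
    rw [hW₂t] at this
    linarith [hd1 t (le_of_lt ht)]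
  -- ratio F₀ / c is monotone
  have hrmono : MonotoneOn (fun x => F₀ x / c x) (Icc t σ) := by
    refine myMonoIcc (f' := fun x => W₂ x / (c x) ^ 2) ?_ ?_ ?_
    · exact (hF₀c.mono hsub).div hccont.continuousOn (fun x _ => ne_of_gt (hcpos x))
    · intro x hx
      have hx0 : (0:ℝ) < x := lt_of_lt_of_le ht (le_of_lt hx.1)
      have hdF₀ : HasDerivAt F₀ (F₀' x) x := (hF₀' x (le_of_lt hx0)).hasDerivAt (Ici_mem_nhds hx0)
      have := hdF₀.div (hcd x) (ne_of_gt (hcpos x))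
      simpa [hW₂, Pi.div_def] using this
    · intro x hx
      have := hW₂nonneg x ⟨le_of_lt hx.1, le_of_lt hx.2⟩
      positivity
  have hfin := hrmono (left_mem_Icc.2 htσ) (right_mem_Icc.2 htσ) htσ
  have hct : c t = 1 := by simp [hc]
  simp only [] at hfin
  rw [hct, div_one, le_div_iff₀ (hcpos σ)] at hfin
  exact hfin

/-- integral of sech bound: ∫ₜˢ 1/cosh(a(σ-t)) ≤ (π/2)/a -/
lemma sech_integral {a t s : ℝ} (ha : 0 < a) (hts : t ≤ s) :
    ∫ σ in t..s, (Real.cosh (a * (σ - t)))⁻¹ ≤ π / 2 / a := by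
  have hg : ∀ x : ℝ, HasDerivAt (fun σ => Real.arctan (Real.sinh (a * (σ - t))) / a)
      ((Real.cosh (a * (x - t)))⁻¹) x := by
    intro x
    have h1 : HasDerivAt (fun σ : ℝ => a * (σ - t)) a x := by
      simpa using (((hasDerivAt_id x).sub_const t).const_mul a)
    have h2 := (Real.hasDerivAt_sinh (a * (x - t))).comp x h1
    have h3 := (Real.hasDerivAt_arctan (Real.sinh (a * (x - t)))).comp x h2
    have h4 := h3.div_const a
    refine h4.congr_deriv (Eq.symm ?_)
    have hcosh := Real.cosh_pos (x := a * (x - t))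
    have hsq : Real.cosh (a * (x - t)) ^ 2 = Real.sinh (a * (x - t)) ^ 2 + 1 :=
      Real.cosh_sq (a * (x - t))
    rw [eq_comm]
    field_simp
    linear_combination hsq
  have hint : IntervalIntegrable (fun σ => (Real.cosh (a * (σ - t)))⁻¹) volume t s := by
    apply Continuous.intervalIntegrable
    have : Continuous fun σ : ℝ => Real.cosh (a * (σ - t)) :=
      Real.continuous_cosh.comp (continuous_const.mul (continuous_id.sub continuous_const))
    exact this.inv₀ (fun x => (Real.cosh_pos _).ne')
  rw [intervalIntegral.integral_eq_sub_of_hasDerivAt (fun x _ => hg x) hint]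
  simp only [sub_self, mul_zero, Real.sinh_zero, Real.arctan_zero, zero_div, sub_zero]
  gcongr
  exact (Real.arctan_lt_pi_div_two _).le

/-- Lemma 1 (iii): comparison of the solutions `F`, `F₀` of the Jacobi equations with
curvatures `k ≤ 0` and `k₀ < 0` (non-increasing), under the integrability of
`φ = |k - k₀|/√(-k₀)`:  `e^{-C} ≤ F/F₀ ≤ e^{C}` with `C = (π/2)∫₀^∞ φ`. -/
theorem stmt_3 (k k₀ F F' F'' F₀ F₀' F₀'' : ℝ → ℝ)
    (hk_cont : ContinuousOn k (Set.Ici 0))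
    (hk₀_cont : ContinuousOn k₀ (Set.Ici 0))
    (hk_nonpos : ∀ s ∈ Set.Ici (0 : ℝ), k s ≤ 0)
    (hk₀_neg : ∀ s ∈ Set.Ici (0 : ℝ), k₀ s < 0)
    (hk₀_mono : ∀ s ∈ Set.Ici (0 : ℝ), ∀ t ∈ Set.Ici (0 : ℝ), s ≤ t → k₀ t ≤ k₀ s)
    (hF' : ∀ s ∈ Set.Ici (0 : ℝ), HasDerivWithinAt F (F' s) (Set.Ici 0) s)
    (hF'' : ∀ s ∈ Set.Ici (0 : ℝ), HasDerivWithinAt F' (F'' s) (Set.Ici 0) s)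
    (hF''_cont : ContinuousOn F'' (Set.Ici 0))
    (hODE : ∀ s ∈ Set.Ici (0 : ℝ), F'' s + k s * F s = 0)
    (hF0 : F 0 = 0) (hF'0 : F' 0 = 1)
    (hF₀' : ∀ s ∈ Set.Ici (0 : ℝ), HasDerivWithinAt F₀ (F₀' s) (Set.Ici 0) s)
    (hF₀'' : ∀ s ∈ Set.Ici (0 : ℝ), HasDerivWithinAt F₀' (F₀'' s) (Set.Ici 0) s)
    (hF₀''_cont : ContinuousOn F₀'' (Set.Ici 0))
    (hODE₀ : ∀ s ∈ Set.Ici (0 : ℝ), F₀'' s + k₀ s * F₀ s = 0)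
    (hF₀0 : F₀ 0 = 0) (hF₀'0 : F₀' 0 = 1)
    (φ : ℝ → ℝ) (hφ : ∀ s, φ s = |k s - k₀ s| / Real.sqrt (-(k₀ s)))
    (hφ_int : IntegrableOn φ (Set.Ici 0))
    (C : ℝ) (hC : C = (Real.pi / 2) * ∫ t in Set.Ici (0 : ℝ), φ t) :
    ∀ s > (0 : ℝ), Real.exp (-C) ≤ F s / F₀ s ∧ F s / F₀ s ≤ Real.exp C := by
  have hk₀_nonpos : ∀ s ∈ Ici (0:ℝ), k₀ s ≤ 0 := fun s hs => (hk₀_neg s hs).le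
  obtain ⟨hFpos, hF'ge, hFge, hFmono⟩ :=
    jacobi_facts k F F' F'' hk_nonpos hF' hF'' hODE hF0 hF'0
  obtain ⟨hF₀pos, hF₀'ge, hF₀ge, hF₀mono⟩ :=
    jacobi_facts k₀ F₀ F₀' F₀'' hk₀_nonpos hF₀' hF₀'' hODE₀ hF₀0 hF₀'0
  have hFc : ContinuousOn F (Ici 0) := fun s hs => (hF' s hs).continuousWithinAt
  have hF₀c : ContinuousOn F₀ (Ici 0) := fun s hs => (hF₀' s hs).continuousWithinAt
  set a : ℝ → ℝ := fun t => Real.sqrt (-k₀ t) with ha_def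
  have ha_pos : ∀ t ∈ Ici (0:ℝ), 0 < a t := fun t ht =>
    Real.sqrt_pos.2 (by linarith [hk₀_neg t ht])
  have ha_mono : ∀ t ∈ Ici (0:ℝ), a 0 ≤ a t := fun t ht =>
    Real.sqrt_le_sqrt (by linarith [hk₀_mono 0 self_mem_Ici t ht ht])
  set q : ℝ → ℝ := fun t => |k t - k₀ t| with hq_def
  have hq_cont : ContinuousOn q (Ici 0) := (hk_cont.sub hk₀_cont).abs
  have hq_nonneg : ∀ t, 0 ≤ q t := fun t => abs_nonneg _
  set G : ℝ → ℝ := fun t => F t * F₀ t with hG_def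
  have hG_cont : ContinuousOn G (Ici 0) := hFc.mul hF₀c
  have hFpos' : ∀ t : ℝ, 0 < t → 0 < F t := fun t ht => lt_of_lt_of_le ht (hFge t ht.le)
  have hF₀pos' : ∀ t : ℝ, 0 < t → 0 < F₀ t := fun t ht => lt_of_lt_of_le ht (hF₀ge t ht.le)
  have hGpos : ∀ t : ℝ, 0 < t → 0 < G t := fun t ht => mul_pos (hFpos' t ht) (hF₀pos' t ht)
  have hGnonneg : ∀ t ∈ Ici (0:ℝ), 0 ≤ G t := fun t ht =>
    mul_nonneg (hFpos t ht) (hF₀pos t ht)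
  have hGmono : MonotoneOn G (Ici 0) := fun x hx y hy hxy =>
    mul_le_mul (hFmono hx hy hxy) (hF₀mono hx hy hxy) (hF₀pos x hx) (hFpos y hy)
  set W : ℝ → ℝ := fun t => F' t * F₀ t - F t * F₀' t with hW_def
  have hWd : ∀ x ∈ Ici (0:ℝ), HasDerivWithinAt W ((k₀ x - k x) * G x) (Ici 0) x := by
    intro x hx
    have h := ((hF'' x hx).mul (hF₀' x hx)).sub ((hF' x hx).mul (hF₀'' x hx))
    have heq : F'' x * F₀ x + F' x * F₀' x - (F' x * F₀' x + F x * F₀'' x)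
        = (k₀ x - k x) * G x := by
      have h1 := hODE x hx
      have h2 := hODE₀ x hx
      simp only [hG_def]
      linear_combination F₀ x * h1 - F x * h2
    rwa [heq] at h
  have hWc : ContinuousOn W (Ici 0) := fun s hs => (hWd s hs).continuousWithinAt
  have hW0 : W 0 = 0 := by simp [hW_def, hF0, hF₀0]
  set L : ℝ → ℝ := fun t => Real.log (F t) - Real.log (F₀ t) with hL_def
  have hL' : ∀ x : ℝ, 0 < x → HasDerivAt L (W x / G x) x := by
    intro x hx
    have hdF : HasDerivAt F (F' x) x := (hF' x hx.le).hasDerivAt (Ici_mem_nhds hx)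
    have hdF₀ : HasDerivAt F₀ (F₀' x) x := (hF₀' x hx.le).hasDerivAt (Ici_mem_nhds hx)
    have h := (hdF.log (hFpos' x hx).ne').sub (hdF₀.log (hF₀pos' x hx).ne')
    have heq : F' x / F x - F₀' x / F₀ x = W x / G x := by
      simp only [hW_def, hG_def]
      field_simp [(hFpos' x hx).ne', (hF₀pos' x hx).ne']
      try ring
    rwa [heq] at h
  have hLc : ∀ x : ℝ, 0 < x → ContinuousAt L x := fun x hx =>
    (hL' x hx).continuousAt
  -- core sech estimate
  have hcore : ∀ t s : ℝ, 0 < t → t ≤ s → G t * ∫ σ in t..s, (G σ)⁻¹ ≤ π / 2 / a t := by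
    intro t s ht hts
    have hIcc : Icc t s ⊆ Ici (0:ℝ) := fun y hy => le_trans ht.le hy.1
    have hIccIoi : Icc t s ⊆ Ioi (0:ℝ) := fun y hy => lt_of_lt_of_le ht hy.1
    have hGIcc : ∀ y ∈ Icc t s, 0 < G y := fun y hy => hGpos y (hIccIoi hy)
    have huIcc : uIcc t s = Icc t s := uIcc_of_le hts
    have hGinv_int : IntervalIntegrable (fun σ => (G σ)⁻¹) volume t s := by
      apply ContinuousOn.intervalIntegrable
      rw [huIcc]
      exact (hG_cont.mono hIcc).inv₀ (fun y hy => (hGIcc y hy).ne')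
    have hsech_int : IntervalIntegrable (fun σ => (Real.cosh (a t * (σ - t)))⁻¹) volume t s := by
      apply Continuous.intervalIntegrable
      exact (Real.continuous_cosh.comp
        (continuous_const.mul (continuous_id.sub continuous_const))).inv₀
        (fun y => (Real.cosh_pos _).ne')
    have h1 : G t * ∫ σ in t..s, (G σ)⁻¹ = ∫ σ in t..s, G t * (G σ)⁻¹ := by
      rw [intervalIntegral.integral_const_mul]
    rw [h1]
    have h2 : (∫ σ in t..s, G t * (G σ)⁻¹) ≤ ∫ σ in t..s, (Real.cosh (a t * (σ - t)))⁻¹ := by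
      apply intervalIntegral.integral_mono_on hts (hGinv_int.const_mul _) hsech_int
      intro σ hσ
      have hGσ : 0 < G σ := hGIcc σ hσ
      have hcσ : 0 < Real.cosh (a t * (σ - t)) := Real.cosh_pos _
      have h3 : G t * Real.cosh (a t * (σ - t)) ≤ G σ := by
        have hc1 : F₀ t * Real.cosh (a t * (σ - t)) ≤ F₀ σ :=
          cosh_comparison k₀ F₀ F₀' F₀'' hk₀_neg hk₀_mono hF₀' hF₀'' hODE₀ hF₀pos hF₀'ge
            ht hσ.1
        have hc2 : F t ≤ F σ := hFmono (hIcc (left_mem_Icc.2 hts)) (hIcc hσ) hσ.1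
        calc G t * Real.cosh (a t * (σ - t)) = F t * (F₀ t * Real.cosh (a t * (σ - t))) := by
              simp only [hG_def]; ring
          _ ≤ F t * F₀ σ := by
              apply mul_le_mul_of_nonneg_left hc1 (hFpos t (hIcc (left_mem_Icc.2 hts)))
          _ ≤ F σ * F₀ σ := by
              apply mul_le_mul_of_nonneg_right hc2 (hF₀pos σ (hIcc hσ))
      rw [← div_eq_mul_inv, ← one_div, div_le_div_iff₀ hGσ hcσ]
      linarith
    exact le_trans h2 (sech_integral (ha_pos t ht.le) hts)
  intro s₀ hs₀
  obtain ⟨Q, hQ⟩ := (isCompact_Icc (a := (0:ℝ)) (b := s₀)).exists_bound_of_continuousOn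
      (hq_cont.mono (fun t ht => ht.1))
  have hQ0 : 0 ≤ Q := le_trans (norm_nonneg _) (hQ 0 (left_mem_Icc.2 hs₀.le))
  have hqQ : ∀ t ∈ Icc (0:ℝ) s₀, q t ≤ Q := fun t ht => le_trans (le_abs_self _) (hQ t ht)
  set c₀ : ℝ := π / 2 / a 0 with hc₀
  have hc₀pos : 0 < c₀ := div_pos (by positivity) (ha_pos 0 self_mem_Ici)
  have key : ∀ ε ∈ Ioo (0:ℝ) s₀, |L s₀| ≤ |L ε| + Q * ε * c₀ + C := by
    intro ε hε
    obtain ⟨hε0, hεs⟩ := hε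
    have hIccsub : Icc ε s₀ ⊆ Ici (0:ℝ) := fun y hy => le_trans hε0.le hy.1
    have hIccIoi : Icc ε s₀ ⊆ Ioi (0:ℝ) := fun y hy => lt_of_lt_of_le hε0 hy.1
    have hGinv_contOn : ContinuousOn (fun σ => (G σ)⁻¹) (Ioi 0) :=
      (hG_cont.mono Ioi_subset_Ici_self).inv₀ (fun y hy => (hGpos y hy).ne')
    have hGinv_int : ∀ x ∈ Ioi (0:ℝ), IntervalIntegrable (fun σ => (G σ)⁻¹) volume ε x := by
      intro x hx
      apply ContinuousOn.intervalIntegrable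
      apply hGinv_contOn.mono
      intro y hy
      exact lt_of_lt_of_le (lt_min hε0 hx) hy.1
    set K : ℝ → ℝ := fun x => ∫ σ in ε..x, (G σ)⁻¹ with hK_def
    have hK' : ∀ x ∈ Ioi (0:ℝ), HasDerivAt K ((G x)⁻¹) x := fun x hx =>
      intervalIntegral.integral_hasDerivAt_right (hGinv_int x hx)
        (ContinuousOn.stronglyMeasurableAtFilter isOpen_Ioi hGinv_contOn x hx)
        ((hGinv_contOn x hx).continuousAt (Ioi_mem_nhds hx))
    have hKcont : ContinuousOn K (Ioi 0) := fun x hx =>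
      ((hK' x hx).continuousAt).continuousWithinAt
    set qG : ℝ → ℝ := fun σ => q σ * G σ with hqG_def
    have hqG_cont : ContinuousOn qG (Ici 0) := hq_cont.mul hG_cont
    have hqG_contAt : ∀ x ∈ Ioi (0:ℝ), ContinuousAt qG x := fun x hx =>
      (hqG_cont x (Set.mem_Ici.2 (le_of_lt (Set.mem_Ioi.1 hx)))).continuousAt (Ici_mem_nhds hx)
    have hqG_int : ∀ x ∈ Ioi (0:ℝ), IntervalIntegrable qG volume ε x := by
      intro x hx
      apply ContinuousOn.intervalIntegrable
      apply (hqG_cont.mono (fun y (hy : y ∈ Ioi 0) => le_of_lt hy)).mono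
      intro y hy
      exact lt_of_lt_of_le (lt_min hε0 hx) hy.1
    set B : ℝ → ℝ := fun x => ∫ σ in ε..x, qG σ with hB_def
    have hB' : ∀ x ∈ Ioi (0:ℝ), HasDerivAt B (qG x) x := fun x hx =>
      intervalIntegral.integral_hasDerivAt_right (hqG_int x hx)
        (ContinuousAt.stronglyMeasurableAtFilter isOpen_Ioi hqG_contAt x hx)
        (hqG_contAt x hx)
    have hBcont : ContinuousOn B (Ioi 0) := fun x hx =>
      ((hB' x hx).continuousAt).continuousWithinAt
    have hqGK_contOn : ContinuousOn (fun σ => qG σ * K σ) (Ioi 0) :=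
      (hqG_cont.mono Ioi_subset_Ici_self).mul hKcont
    have hqGK_int : ∀ x ∈ Ioi (0:ℝ), IntervalIntegrable (fun σ => qG σ * K σ) volume ε x := by
      intro x hx
      apply ContinuousOn.intervalIntegrable
      apply hqGK_contOn.mono
      intro y hy
      exact lt_of_lt_of_le (lt_min hε0 hx) hy.1
    set J : ℝ → ℝ := fun x => ∫ σ in ε..x, qG σ * K σ with hJ_def
    have hJ' : ∀ x ∈ Ioi (0:ℝ), HasDerivAt J (qG x * K x) x := fun x hx =>
      intervalIntegral.integral_hasDerivAt_right (hqGK_int x hx)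
        (ContinuousOn.stronglyMeasurableAtFilter isOpen_Ioi hqGK_contOn x hx)
        ((hqGK_contOn x hx).continuousAt (Ioi_mem_nhds hx))
    have hJcont : ContinuousOn J (Ioi 0) := fun x hx =>
      ((hJ' x hx).continuousAt).continuousWithinAt
    set P : ℝ → ℝ := fun x => K x * B x - J x with hP_def
    have hP' : ∀ x ∈ Ioi (0:ℝ), HasDerivAt P ((G x)⁻¹ * B x) x := by
      intro x hx
      have h := ((hK' x hx).mul (hB' x hx)).sub (hJ' x hx)
      have heq : (G x)⁻¹ * B x + K x * qG x - qG x * K x = (G x)⁻¹ * B x := by ring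
      rwa [heq] at h
    have hPcont : ContinuousOn P (Ioi 0) := (hKcont.mul hBcont).sub hJcont
    -- bound |W x| ≤ |W ε| + B x on [ε, s₀]
    have hWAt : ∀ x ∈ Ioi (0:ℝ), HasDerivAt W ((k₀ x - k x) * G x) x := fun x hx =>
      (hWd x (Set.mem_Ici.2 (le_of_lt (Set.mem_Ioi.1 hx)))).hasDerivAt (Ici_mem_nhds hx)
    have hKε : K ε = 0 := intervalIntegral.integral_same
    have hBε : B ε = 0 := intervalIntegral.integral_same
    have hJε : J ε = 0 := intervalIntegral.integral_same
    have hBm : ∀ x ∈ Icc ε s₀, |W x| ≤ |W ε| + B x := by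
      intro x hx
      have hmono1 : MonotoneOn (fun y => B y - W y) (Icc ε s₀) := by
        refine myMonoIcc (f' := fun y => qG y - (k₀ y - k y) * G y)
          ((hBcont.mono hIccIoi).sub (hWc.mono hIccsub)) ?_ ?_
        · intro y hy
          exact (hB' y (hIccIoi ⟨hy.1.le, hy.2.le⟩)).sub (hWAt y (hIccIoi ⟨hy.1.le, hy.2.le⟩))
        · intro y hy
          have h1 : k₀ y - k y ≤ q y := by
            simp only [hq_def]
            linarith [neg_le_abs (k y - k₀ y)]
          have h2 : 0 ≤ G y := hGnonneg y (hIccsub ⟨hy.1.le, hy.2.le⟩)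
          have h3 : (k₀ y - k y) * G y ≤ q y * G y := mul_le_mul_of_nonneg_right h1 h2
          show (0:ℝ) ≤ qG y - (k₀ y - k y) * G y
          simp only [hqG_def]
          linarith
      have hmono2 : MonotoneOn (fun y => B y + W y) (Icc ε s₀) := by
        refine myMonoIcc (f' := fun y => qG y + (k₀ y - k y) * G y)
          ((hBcont.mono hIccIoi).add (hWc.mono hIccsub)) ?_ ?_
        · intro y hy
          exact (hB' y (hIccIoi ⟨hy.1.le, hy.2.le⟩)).add (hWAt y (hIccIoi ⟨hy.1.le, hy.2.le⟩))
        · intro y hy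
          have h1 : -(q y) ≤ k₀ y - k y := by
            simp only [hq_def]
            linarith [le_abs_self (k y - k₀ y)]
          have h2 : 0 ≤ G y := hGnonneg y (hIccsub ⟨hy.1.le, hy.2.le⟩)
          have h3 : (-(q y)) * G y ≤ (k₀ y - k y) * G y := mul_le_mul_of_nonneg_right h1 h2
          show (0:ℝ) ≤ qG y + (k₀ y - k y) * G y
          simp only [hqG_def]
          nlinarith
      have hεmem : ε ∈ Icc ε s₀ := left_mem_Icc.2 hεs.le
      have h1 := hmono1 hεmem hx hx.1
      have h2 := hmono2 hεmem hx hx.1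
      simp only [hBε] at h1 h2
      rw [abs_le]
      constructor
      · linarith [neg_abs_le (W ε)]
      · linarith [le_abs_self (W ε)]
    -- the two monotone combinations controlling L
    set Φ : ℝ → ℝ := fun x => |W ε| * K x + P x with hΦ_def
    have hΦcont : ContinuousOn Φ (Ioi 0) := (continuousOn_const.mul hKcont).add hPcont
    have hΦ' : ∀ x ∈ Ioi (0:ℝ), HasDerivAt Φ (|W ε| * (G x)⁻¹ + (G x)⁻¹ * B x) x :=
      fun x hx => ((hK' x hx).const_mul _).add (hP' x hx)
    have hLcont : ContinuousOn L (Ioi 0) := fun x hx => (hLc x hx).continuousWithinAt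
    have hΦε : Φ ε = 0 := by simp [hΦ_def, hKε, hBε, hJε, hP_def]
    have hWabs_bound : ∀ y ∈ Ioo ε s₀, |W y| * (G y)⁻¹ ≤ |W ε| * (G y)⁻¹ + (G y)⁻¹ * B y := by
      intro y hy
      have hGy : 0 < G y := hGpos y (hIccIoi ⟨hy.1.le, hy.2.le⟩)
      have h1 := hBm y ⟨hy.1.le, hy.2.le⟩
      have h2 : |W y| * (G y)⁻¹ ≤ (|W ε| + B y) * (G y)⁻¹ :=
        mul_le_mul_of_nonneg_right h1 (inv_nonneg.2 hGy.le)
      nlinarith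
    have hmono3 : MonotoneOn (fun y => Φ y - L y) (Icc ε s₀) := by
      refine myMonoIcc (f' := fun y => (|W ε| * (G y)⁻¹ + (G y)⁻¹ * B y) - W y / G y)
        ((hΦcont.mono hIccIoi).sub (hLcont.mono hIccIoi)) ?_ ?_
      · intro y hy
        exact (hΦ' y (hIccIoi ⟨hy.1.le, hy.2.le⟩)).sub (hL' y (hIccIoi ⟨hy.1.le, hy.2.le⟩))
      · intro y hy
        have hGy : 0 < G y := hGpos y (hIccIoi ⟨hy.1.le, hy.2.le⟩)
        have h2 := hWabs_bound y hy
        have h3 : W y * (G y)⁻¹ ≤ |W y| * (G y)⁻¹ :=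
          mul_le_mul_of_nonneg_right (le_abs_self _) (inv_nonneg.2 hGy.le)
        have h4 : W y / G y = W y * (G y)⁻¹ := div_eq_mul_inv _ _
        show (0:ℝ) ≤ (|W ε| * (G y)⁻¹ + (G y)⁻¹ * B y) - W y / G y
        rw [h4]
        linarith
    have hmono4 : MonotoneOn (fun y => Φ y + L y) (Icc ε s₀) := by
      refine myMonoIcc (f' := fun y => (|W ε| * (G y)⁻¹ + (G y)⁻¹ * B y) + W y / G y)
        ((hΦcont.mono hIccIoi).add (hLcont.mono hIccIoi)) ?_ ?_
      · intro y hy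
        exact (hΦ' y (hIccIoi ⟨hy.1.le, hy.2.le⟩)).add (hL' y (hIccIoi ⟨hy.1.le, hy.2.le⟩))
      · intro y hy
        have hGy : 0 < G y := hGpos y (hIccIoi ⟨hy.1.le, hy.2.le⟩)
        have h2 := hWabs_bound y hy
        have h3 : -(W y * (G y)⁻¹) ≤ |W y| * (G y)⁻¹ := by
          rw [← neg_mul]
          exact mul_le_mul_of_nonneg_right (neg_le_abs _) (inv_nonneg.2 hGy.le)
        have h4 : W y / G y = W y * (G y)⁻¹ := div_eq_mul_inv _ _
        show (0:ℝ) ≤ (|W ε| * (G y)⁻¹ + (G y)⁻¹ * B y) + W y / G y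
        rw [h4]
        linarith
    have hεmem : ε ∈ Icc ε s₀ := left_mem_Icc.2 hεs.le
    have hs₀mem : s₀ ∈ Icc ε s₀ := right_mem_Icc.2 hεs.le
    have hd3 := hmono3 hεmem hs₀mem hεs.le
    have hd4 := hmono4 hεmem hs₀mem hεs.le
    simp only [hΦε] at hd3 hd4
    have habs : |L s₀ - L ε| ≤ Φ s₀ := by
      rw [abs_le]
      constructor <;> [linarith; linarith]
    -- bound for |W ε|
    have hWε : |W ε| ≤ Q * G ε * ε := by
      have hIcc0ε : Icc (0:ℝ) ε ⊆ Ici 0 := fun y hy => hy.1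
      have hbound : ∀ x ∈ Icc (0:ℝ) ε, ‖(k₀ x - k x) * G x‖ ≤ Q * G ε := by
        intro x hx
        rw [norm_mul]
        have h1 : ‖k₀ x - k x‖ = q x := by
          simp only [hq_def, Real.norm_eq_abs]
          rw [abs_sub_comm]
        have h2 : ‖G x‖ = G x := abs_of_nonneg (hGnonneg x (hIcc0ε hx))
        rw [h1, h2]
        exact mul_le_mul (hqQ x ⟨hx.1, le_trans hx.2 hεs.le⟩)
          (hGmono (hIcc0ε hx) (le_of_lt hε0 : (0:ℝ) ≤ ε) hx.2)
          (hGnonneg x (hIcc0ε hx)) hQ0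
      have hmv := (convex_Icc (0:ℝ) ε).norm_image_sub_le_of_norm_hasDerivWithin_le
        (f := W) (f' := fun x => (k₀ x - k x) * G x)
        (fun x hx => (hWd x (hIcc0ε hx)).mono hIcc0ε) hbound
        (left_mem_Icc.2 hε0.le) (right_mem_Icc.2 hε0.le)
      rw [hW0, sub_zero, sub_zero, Real.norm_eq_abs, Real.norm_eq_abs, abs_of_pos hε0] at hmv
      exact hmv
    have hKs₀nonneg : 0 ≤ K s₀ := by
      apply intervalIntegral.integral_nonneg hεs.le
      intro σ hσ
      exact inv_nonneg.2 (hGnonneg σ (le_trans hε0.le hσ.1))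
    have hGK : G ε * K s₀ ≤ π / 2 / a ε := hcore ε s₀ hε0 hεs.le
    have hterm1 : |W ε| * K s₀ ≤ Q * ε * c₀ := by
      have haε := ha_pos ε hε0.le
      have ha0 := ha_pos 0 self_mem_Ici
      calc |W ε| * K s₀ ≤ (Q * G ε * ε) * K s₀ := mul_le_mul_of_nonneg_right hWε hKs₀nonneg
        _ = (Q * ε) * (G ε * K s₀) := by ring
        _ ≤ (Q * ε) * (π / 2 / a ε) := by
            apply mul_le_mul_of_nonneg_left hGK (by positivity)
        _ ≤ (Q * ε) * (π / 2 / a 0) := by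
            apply mul_le_mul_of_nonneg_left _ (by positivity)
            exact div_le_div_of_nonneg_left (by positivity) ha0 (ha_mono ε hε0.le)
        _ = Q * ε * c₀ := by rw [hc₀]
    -- bound for P s₀
    have hs₀Ioi : s₀ ∈ Ioi (0:ℝ) := hs₀
    have hPbound : P s₀ ≤ C := by
      have hKs₀qG_int : IntervalIntegrable (fun t => qG t * (K s₀ - K t)) volume ε s₀ := by
        apply ContinuousOn.intervalIntegrable
        rw [uIcc_of_le hεs.le]
        exact ((hqG_cont.mono hIccsub).mul
          ((continuousOn_const.sub (hKcont.mono hIccIoi)))).congr (fun y hy => rfl)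
      have hKs₀qG_int2 : IntervalIntegrable (fun t => K s₀ * qG t) volume ε s₀ :=
        (hqG_int s₀ hs₀Ioi).const_mul _
      have hqGK_int2 : IntervalIntegrable (fun t => qG t * K t) volume ε s₀ :=
        hqGK_int s₀ hs₀Ioi
      have hPs₀ : P s₀ = ∫ t in ε..s₀, qG t * (K s₀ - K t) := by
        have h2 : (∫ t in ε..s₀, qG t * (K s₀ - K t))
            = (∫ t in ε..s₀, K s₀ * qG t) - ∫ t in ε..s₀, qG t * K t := by
          rw [← intervalIntegral.integral_sub hKs₀qG_int2 hqGK_int2]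
          apply intervalIntegral.integral_congr
          intro y hy
          ring
        rw [h2, intervalIntegral.integral_const_mul]
      rw [hPs₀]
      have hpt : ∀ t ∈ Icc ε s₀, qG t * (K s₀ - K t) ≤ π / 2 * φ t := by
        intro t ht
        have ht0 : (0:ℝ) < t := hIccIoi ht
        have hKdiff : K s₀ - K t = ∫ σ in t..s₀, (G σ)⁻¹ :=
          intervalIntegral.integral_interval_sub_left (hGinv_int s₀ hs₀Ioi) (hGinv_int t ht0)
        have h2 : G t * (K s₀ - K t) ≤ π / 2 / a t := by
          rw [hKdiff]; exact hcore t s₀ ht0 ht.2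
        have h3 : qG t * (K s₀ - K t) = q t * (G t * (K s₀ - K t)) := by
          simp only [hqG_def]; ring
        rw [h3]
        calc q t * (G t * (K s₀ - K t)) ≤ q t * (π / 2 / a t) :=
              mul_le_mul_of_nonneg_left h2 (hq_nonneg t)
          _ = π / 2 * φ t := by
              rw [hφ t]
              simp only [hq_def, ha_def]
              ring
      have hφ_ii : IntervalIntegrable φ volume ε s₀ := by
        rw [intervalIntegrable_iff]
        apply hφ_int.mono_set
        intro y hy
        rw [uIoc_of_le hεs.le] at hy
        exact le_trans hε0.le hy.1.le
      have hmono_int := intervalIntegral.integral_mono_on hεs.le hKs₀qG_int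
        (hφ_ii.const_mul (π/2)) hpt
      calc (∫ t in ε..s₀, qG t * (K s₀ - K t)) ≤ ∫ t in ε..s₀, π / 2 * φ t := hmono_int
        _ = π / 2 * ∫ t in ε..s₀, φ t := intervalIntegral.integral_const_mul _ _
        _ ≤ π / 2 * ∫ t in Ici (0:ℝ), φ t := by
            apply mul_le_mul_of_nonneg_left _ (by positivity)
            rw [intervalIntegral.integral_of_le hεs.le]
            apply setIntegral_mono_set hφ_int
            · exact ae_of_all _ (fun y => by rw [hφ]; positivity)
            · exact HasSubset.Subset.eventuallyLE (fun y hy => le_trans hε0.le hy.1.le)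
        _ = C := hC.symm
    have hΦs₀ : Φ s₀ ≤ Q * ε * c₀ + C := by
      have : Φ s₀ = |W ε| * K s₀ + P s₀ := rfl
      rw [this]
      linarith
    have htri : |L s₀| ≤ |L s₀ - L ε| + |L ε| := by
      have h := abs_add_le (L s₀ - L ε) (L ε)
      simpa using h
    linarith
  -- limits as ε → 0⁺
  have hslopeF : Tendsto (fun ε => F ε / ε) (𝓝[>] (0:ℝ)) (𝓝 1) := by
    have h := hasDerivWithinAt_iff_tendsto_slope.1 (hF' 0 self_mem_Ici)
    rw [hF'0, Ici_sdiff_left] at h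
    refine Tendsto.congr' ?_ h
    filter_upwards [self_mem_nhdsWithin] with ε hε
    rw [slope_def_field, hF0, sub_zero, sub_zero]
  have hslopeF₀ : Tendsto (fun ε => F₀ ε / ε) (𝓝[>] (0:ℝ)) (𝓝 1) := by
    have h := hasDerivWithinAt_iff_tendsto_slope.1 (hF₀' 0 self_mem_Ici)
    rw [hF₀'0, Ici_sdiff_left] at h
    refine Tendsto.congr' ?_ h
    filter_upwards [self_mem_nhdsWithin] with ε hε
    rw [slope_def_field, hF₀0, sub_zero, sub_zero]
  have hratio : Tendsto (fun ε => F ε / F₀ ε) (𝓝[>] (0:ℝ)) (𝓝 1) := by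
    have h : Tendsto (fun ε => (F ε / ε) / (F₀ ε / ε)) (𝓝[>] (0:ℝ)) (𝓝 1) := by
      simpa [Pi.div_def] using hslopeF.div hslopeF₀ one_ne_zero
    refine Tendsto.congr' ?_ h
    filter_upwards [self_mem_nhdsWithin] with ε (hε : ε ∈ Ioi 0)
    have hεne : (ε:ℝ) ≠ 0 := ne_of_gt hε
    have hF₀ne : F₀ ε ≠ 0 := (hF₀pos' ε hε).ne'
    field_simp
  have hLtend : Tendsto L (𝓝[>] (0:ℝ)) (𝓝 0) := by
    have hlog := (Real.continuousAt_log one_ne_zero).tendsto.comp hratio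
    rw [Real.log_one] at hlog
    refine Tendsto.congr' ?_ hlog
    filter_upwards [self_mem_nhdsWithin] with ε (hε : ε ∈ Ioi 0)
    show Real.log (F ε / F₀ ε) = L ε
    rw [Real.log_div (hFpos' ε hε).ne' (hF₀pos' ε hε).ne']
  have hRHS : Tendsto (fun ε => |L ε| + Q * ε * c₀ + C) (𝓝[>] (0:ℝ)) (𝓝 C) := by
    have h1 : Tendsto (fun ε => |L ε|) (𝓝[>] (0:ℝ)) (𝓝 0) := by
      have h := hLtend.abs
      simpa using h
    have h2 : Tendsto (fun ε : ℝ => Q * ε * c₀) (𝓝[>] (0:ℝ)) (𝓝 0) := by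
      have hcont : Continuous (fun ε : ℝ => Q * ε * c₀) := by
        exact (continuous_const.mul continuous_id).mul continuous_const
      have h : Tendsto (fun ε : ℝ => Q * ε * c₀) (𝓝[>] (0:ℝ)) (𝓝 (Q * 0 * c₀)) :=
        (hcont.tendsto 0).mono_left nhdsWithin_le_nhds
      simpa using h
    have h := (h1.add h2).add (tendsto_const_nhds (x := C))
    simpa using h
  have hfinal : |L s₀| ≤ C := by
    refine ge_of_tendsto hRHS ?_
    filter_upwards [Ioo_mem_nhdsGT hs₀] with ε hε
    exact key ε hε
  obtain ⟨hb1, hb2⟩ := abs_le.1 hfinal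
  have hratio_eq : F s₀ / F₀ s₀ = Real.exp (L s₀) := by
    simp only [hL_def]
    rw [Real.exp_sub, Real.exp_log (hFpos' s₀ hs₀), Real.exp_log (hF₀pos' s₀ hs₀)]
  rw [hratio_eq]
  exact ⟨Real.exp_le_exp.2 hb1, Real.exp_le_exp.2 hb2⟩
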